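/- arXiv:1803.06797 — 4 statements merged into one kernel-verified Lean document; each statement's English description precedes it below -/
import Mathlib

section
/- Let K be a finite nonempty set, ρ : K → ℝ with ρ_k > 0, c ≥ 0, and let F̄ : ℝ → [0,1] be a fixed function (the common tail distribution of valuations). Define R(p) = (∑_k ρ_k (p_k − c) F̄(p_k)) / (1 + ∑_k ρ_k F̄(p_k)) for price vectors p : K → [0, v̄] where v̄ > 0. Then sup over all price vectors p of R(p) equals sup over single prices q ∈ [0, v̄] of (ρ (q − c) F̄(q)) / (1 + ρ F̄(q)), where ρ = ∑_k ρ_k. In particular, if a maximizer q* of the single-price problem exists, the constant vector p_k = q* for all k is optimal for R. -/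
open Set

theorem stmt1 (K : Type*) [Fintype K] [Nonempty K]
    (ρk : K → ℝ) (hρ : ∀ k, 0 < ρk k)
    (c : ℝ) (hc : 0 ≤ c)
    (vbar : ℝ) (hv : 0 < vbar)
    (Fbar : ℝ → ℝ) (hF : ∀ x, Fbar x ∈ Set.Icc (0:ℝ) 1)
    (R : (K → ℝ) → ℝ)
    (hR : ∀ p, R p = (∑ k, ρk k * (p k - c) * Fbar (p k)) /
        (1 + ∑ k, ρk k * Fbar (p k))) :
    (sSup {r : ℝ | ∃ p : K → ℝ, (∀ k, p k ∈ Set.Icc 0 vbar) ∧ r = R p} =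
      sSup {r : ℝ | ∃ q ∈ Set.Icc 0 vbar,
        r = ((∑ k, ρk k) * (q - c) * Fbar q) / (1 + (∑ k, ρk k) * Fbar q)}) ∧
    (∀ qstar ∈ Set.Icc 0 vbar,
      (∀ q ∈ Set.Icc 0 vbar,
        ((∑ k, ρk k) * (q - c) * Fbar q) / (1 + (∑ k, ρk k) * Fbar q) ≤
        ((∑ k, ρk k) * (qstar - c) * Fbar qstar) / (1 + (∑ k, ρk k) * Fbar qstar)) →
      ∀ p : K → ℝ, (∀ k, p k ∈ Set.Icc 0 vbar) →
        R p ≤ R (fun _ => qstar)) := by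
  have hρpos : 0 < ∑ k, ρk k :=
    Finset.sum_pos (fun k _ => hρ k) Finset.univ_nonempty
  set ρ : ℝ := ∑ k, ρk k with hρdef
  -- the single-price objective
  set g : ℝ → ℝ := fun q => (ρ * (q - c) * Fbar q) / (1 + ρ * Fbar q) with hg
  have hden : ∀ q : ℝ, 0 < 1 + ρ * Fbar q := by
    intro q
    have h0 := (hF q).1
    nlinarith
  have hdenp : ∀ p : K → ℝ, 0 < 1 + ∑ k, ρk k * Fbar (p k) := by
    intro p
    have : 0 ≤ ∑ k, ρk k * Fbar (p k) :=
      Finset.sum_nonneg fun k _ => mul_nonneg (hρ k).le (hF (p k)).1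
    linarith
  -- constant price vectors realize g
  have hconst : ∀ q : ℝ, R (fun _ => q) = g q := by
    intro q
    rw [hR, hg]
    congr 1
    · rw [← Finset.sum_mul, ← Finset.sum_mul]
    · rw [← Finset.sum_mul]
  -- key lemma: if g (p k) ≤ r for all k then R p ≤ r
  have key : ∀ (p : K → ℝ) (r : ℝ), (∀ k, g (p k) ≤ r) → R p ≤ r := by
    intro p r hr
    rw [hR, div_le_iff₀ (hdenp p), ← mul_le_mul_iff_right₀ hρpos]
    have hterm : ∀ k, ρ * (ρk k * (p k - c) * Fbar (p k)) ≤
        ρk k * (r * (1 + ρ * Fbar (p k))) := by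
      intro k
      have h1 := hr k
      rw [hg] at h1
      simp only at h1
      rw [div_le_iff₀ (hden (p k))] at h1
      have h2 := mul_le_mul_of_nonneg_left h1 (hρ k).le
      nlinarith [h2]
    calc ρ * ∑ k, ρk k * (p k - c) * Fbar (p k)
        = ∑ k, ρ * (ρk k * (p k - c) * Fbar (p k)) := by rw [Finset.mul_sum]
      _ ≤ ∑ k, ρk k * (r * (1 + ρ * Fbar (p k))) :=
          Finset.sum_le_sum fun k _ => hterm k
      _ = ∑ k, (r * ρk k + (r * ρ) * (ρk k * Fbar (p k))) := by
          refine Finset.sum_congr rfl fun k _ => by ring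
      _ = r * ρ + (r * ρ) * ∑ k, ρk k * Fbar (p k) := by
          rw [Finset.sum_add_distrib, ← Finset.mul_sum, ← Finset.mul_sum]
      _ = ρ * (r * (1 + ∑ k, ρk k * Fbar (p k))) := by ring
  -- bound: g q ≤ vbar on [0, vbar]
  have hgbd : ∀ q ∈ Set.Icc (0:ℝ) vbar, g q ≤ vbar := by
    intro q hq
    rw [hg]
    simp only
    rw [div_le_iff₀ (hden q)]
    have h0 := (hF q).1
    have h1 := (hF q).2
    nlinarith [hq.1, hq.2, mul_nonneg hρpos.le h0]
  -- the two sets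
  set A := {r : ℝ | ∃ p : K → ℝ, (∀ k, p k ∈ Set.Icc 0 vbar) ∧ r = R p} with hA
  set B := {r : ℝ | ∃ q ∈ Set.Icc (0:ℝ) vbar,
      r = (ρ * (q - c) * Fbar q) / (1 + ρ * Fbar q)} with hB
  have hBA : B ⊆ A := by
    rintro r ⟨q, hq, rfl⟩
    exact ⟨fun _ => q, fun _ => hq, (hconst q).symm⟩
  have hAbd : BddAbove A := by
    refine ⟨vbar, ?_⟩
    rintro r ⟨p, hp, rfl⟩
    exact key p vbar fun k => hgbd (p k) (hp k)
  have hBbd : BddAbove B := hAbd.mono hBA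
  have hBne : B.Nonempty :=
    ⟨g 0, 0, ⟨le_refl 0, hv.le⟩, rfl⟩
  have hAne : A.Nonempty := hBne.mono hBA
  constructor
  · apply le_antisymm
    · refine csSup_le hAne ?_
      rintro r ⟨p, hp, rfl⟩
      obtain ⟨k0, _, hk0⟩ :=
        Finset.exists_mem_eq_sup' Finset.univ_nonempty (fun k => g (p k))
      have h1 : R p ≤ Finset.univ.sup' Finset.univ_nonempty (fun k => g (p k)) :=
        key p _ fun k => Finset.le_sup' (fun k => g (p k)) (Finset.mem_univ k)
      have h2 : Finset.univ.sup' Finset.univ_nonempty (fun k => g (p k)) ∈ B := by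
        rw [hk0]
        exact ⟨p k0, hp k0, rfl⟩
      exact h1.trans (le_csSup hBbd h2)
    · exact csSup_le_csSup hAbd hBne hBA
  · intro qstar hq hmax p hp
    rw [hconst qstar]
    exact key p (g qstar) fun k => hmax (p k) (hp k)
end

section
/- Let X and Y be independent nonnegative real random variables with Y exponentially distributed with rate γ > 0, and suppose P(X > 0) > 0 (so that E[min(X,Y)] > 0). Then P(Y ≤ X) / E[min(X,Y)] = γ. -/
open MeasureTheory Real

theorem stmt3 {Ω : Type*} [MeasureSpace Ω] (μ : Measure Ω) [IsProbabilityMeasure μ]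
    (X Y : Ω → ℝ) (hXm : Measurable X) (hYm : Measurable Y)
    (hX0 : ∀ ω, 0 ≤ X ω) (hY0 : ∀ ω, 0 ≤ Y ω)
    (hindep : ProbabilityTheory.IndepFun X Y μ)
    (γ : ℝ) (hγ : 0 < γ)
    (hYexp : ∀ t : ℝ, 0 ≤ t → μ {ω | t < Y ω} = ENNReal.ofReal (Real.exp (-γ * t)))
    (hXpos : 0 < μ {ω | 0 < X ω}) :
    (μ {ω | Y ω ≤ X ω}).toReal / ∫ ω, min (X ω) (Y ω) ∂μ = γ := by
  set S : ℝ → ENNReal := fun t => μ {ω | t < X ω} with hSdef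
  set D : ENNReal := ∫⁻ t in Set.Ioi (0:ℝ), S t * ENNReal.ofReal (Real.exp (-γ * t)) with hDdef
  -- tail of min is product of tails
  have hmin_tail : ∀ t : ℝ, 0 ≤ t →
      μ {ω | t < min (X ω) (Y ω)} = S t * ENNReal.ofReal (Real.exp (-γ * t)) := by
    intro t ht
    have hset : {ω | t < min (X ω) (Y ω)} = X ⁻¹' (Set.Ioi t) ∩ Y ⁻¹' (Set.Ioi t) := by
      ext ω; simp [lt_min_iff, Set.mem_inter_iff]
    rw [hset, hindep.measure_inter_preimage_eq_mul _ _ measurableSet_Ioi measurableSet_Ioi]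
    congr 1
    exact hYexp t ht
  -- denominator
  have hmin_nn : 0 ≤ᵐ[μ] fun ω => min (X ω) (Y ω) :=
    Filter.Eventually.of_forall fun ω => le_min (hX0 ω) (hY0 ω)
  have hden : ∫ ω, min (X ω) (Y ω) ∂μ = D.toReal := by
    rw [MeasureTheory.integral_eq_lintegral_of_nonneg_ae hmin_nn
      (hXm.min hYm).aestronglyMeasurable]
    congr 1
    rw [lintegral_eq_lintegral_meas_lt μ hmin_nn (hXm.min hYm).aemeasurable]
    exact setLIntegral_congr_fun measurableSet_Ioi
      (fun t ht => hmin_tail t (le_of_lt ht))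
  -- CDF of Y
  have hmapY : ∀ x : ℝ, 0 ≤ x →
      (μ.map Y) {y | y ≤ x} = ENNReal.ofReal (1 - Real.exp (-γ * x)) := by
    intro x hx
    have hIic : {y : ℝ | y ≤ x} = Set.Iic x := rfl
    rw [hIic, Measure.map_apply hYm measurableSet_Iic]
    have hc : Y ⁻¹' Set.Iic x = {ω | x < Y ω}ᶜ := by
      ext ω; simp [not_lt]
    have hms : MeasurableSet {ω | x < Y ω} := hYm measurableSet_Ioi
    rw [hc, measure_compl hms (measure_ne_top μ _), measure_univ, hYexp x hx,
      ← ENNReal.ofReal_one, ← ENNReal.ofReal_sub _ (Real.exp_nonneg _)]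
  -- numerator
  have hnum : μ {ω | Y ω ≤ X ω} = ENNReal.ofReal γ * D := by
    have hjoint := (ProbabilityTheory.indepFun_iff_map_prod_eq_prod_map_map
      hXm.aemeasurable hYm.aemeasurable).mp hindep
    have hmS : MeasurableSet {p : ℝ × ℝ | p.2 ≤ p.1} :=
      measurableSet_le measurable_snd measurable_fst
    have h1 : μ {ω | Y ω ≤ X ω} = ((μ.map X).prod (μ.map Y)) {p : ℝ × ℝ | p.2 ≤ p.1} := by
      rw [← hjoint, Measure.map_apply (hXm.prodMk hYm) hmS]
      rfl
    rw [h1, Measure.prod_apply hmS]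
    have hae : ∀ᵐ x ∂(μ.map X), 0 ≤ x := by
      rw [ae_map_iff hXm.aemeasurable measurableSet_Ici]
      exact Filter.Eventually.of_forall hX0
    have h2 : ∫⁻ x, (μ.map Y) (Prod.mk x ⁻¹' {p : ℝ × ℝ | p.2 ≤ p.1}) ∂(μ.map X)
        = ∫⁻ x, ENNReal.ofReal (1 - Real.exp (-γ * x)) ∂(μ.map X) := by
      refine lintegral_congr_ae ?_
      filter_upwards [hae] with x hx
      have hsec : Prod.mk x ⁻¹' {p : ℝ × ℝ | p.2 ≤ p.1} = {y : ℝ | y ≤ x} := rfl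
      rw [hsec, hmapY x hx]
    have hg : Measurable fun x : ℝ => ENNReal.ofReal (1 - Real.exp (-γ * x)) :=
      (measurable_const.sub (Real.measurable_exp.comp (measurable_id.const_mul (-γ)))).ennreal_ofReal
    have h3 : ∫⁻ x, ENNReal.ofReal (1 - Real.exp (-γ * x)) ∂(μ.map X)
        = ∫⁻ ω, ENNReal.ofReal (1 - Real.exp (-γ * X ω)) ∂μ := lintegral_map hg hXm
    rw [h2, h3]
    -- layer cake with weight γ e^{-γ t}
    have hderiv : ∀ x : ℝ, HasDerivAt (fun t => -Real.exp (-γ * t))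
        (γ * Real.exp (-γ * x)) x := by
      intro x
      have h1 : HasDerivAt (fun t : ℝ => -γ * t) (-γ) x := by
        simpa using (hasDerivAt_id x).const_mul (-γ)
      have h2 := h1.exp
      exact h2.neg.congr_deriv (by ring)
    have hint : ∀ x : ℝ, ∫ t in (0:ℝ)..x, γ * Real.exp (-γ * t) = 1 - Real.exp (-γ * x) := by
      intro x
      have hcont : Continuous fun t : ℝ => γ * Real.exp (-γ * t) := by continuity
      rw [intervalIntegral.integral_eq_sub_of_hasDerivAt
        (fun t _ => hderiv t) (hcont.intervalIntegrable 0 x)]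
      simp only [neg_mul, mul_zero, neg_zero, Real.exp_zero]
      ring
    have key := lintegral_comp_eq_lintegral_meas_lt_mul μ (f := X)
      (g := fun t => γ * Real.exp (-γ * t)) (Filter.Eventually.of_forall hX0)
      hXm.aemeasurable
      (fun t _ => ((by continuity : Continuous fun t : ℝ => γ * Real.exp (-γ * t))).intervalIntegrable 0 t)
      (Filter.Eventually.of_forall fun t => by positivity)
    simp_rw [hint] at key
    rw [key]
    have hre : ∀ t : ℝ, S t * ENNReal.ofReal (γ * Real.exp (-γ * t))
        = ENNReal.ofReal γ * (S t * ENNReal.ofReal (Real.exp (-γ * t))) := by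
      intro t
      rw [ENNReal.ofReal_mul hγ.le]
      ring
    simp_rw [show ∀ t, μ {a | t < X a} = S t from fun t => rfl, hre]
    rw [lintegral_const_mul' _ _ ENNReal.ofReal_ne_top, hDdef]
  -- D is finite
  have hγ0 : ENNReal.ofReal γ ≠ 0 := by
    simp [ENNReal.ofReal_eq_zero, not_le, hγ]
  have hDfin : D ≠ ⊤ := by
    intro h
    have h2 := hnum
    rw [h, ENNReal.mul_top hγ0] at h2
    exact (measure_ne_top μ _) h2
  -- D is positive
  have hDpos : 0 < D := by
    obtain ⟨n, hn⟩ : ∃ n : ℕ, 0 < μ {ω | 1 / ((n : ℝ) + 1) < X ω} := by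
      by_contra h
      push_neg at h
      have hsub : {ω | 0 < X ω} ⊆ ⋃ n : ℕ, {ω | 1 / ((n : ℝ) + 1) < X ω} := by
        intro ω hω
        have hω' : 0 < X ω := hω
        obtain ⟨n, hn⟩ := exists_nat_one_div_lt hω'
        exact Set.mem_iUnion.mpr ⟨n, hn⟩
      have hz : μ {ω | 0 < X ω} = 0 :=
        measure_mono_null hsub
          (measure_iUnion_null fun n => le_antisymm (h n) zero_le)
      exact absurd hz (ne_of_gt hXpos)
    set c : ℝ := 1 / ((n : ℝ) + 1) with hc
    have hcpos : 0 < c := by positivity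
    have hlow : μ {ω | c < X ω} * ENNReal.ofReal (Real.exp (-γ * c)) * ENNReal.ofReal c ≤ D := by
      have h1 : ∫⁻ _ in Set.Ioc (0:ℝ) c,
          (μ {ω | c < X ω} * ENNReal.ofReal (Real.exp (-γ * c)))
          = μ {ω | c < X ω} * ENNReal.ofReal (Real.exp (-γ * c)) * ENNReal.ofReal c := by
        rw [setLIntegral_const, Real.volume_Ioc]
        simp
      rw [← h1]
      have h2 : ∫⁻ t in Set.Ioc (0:ℝ) c, S t * ENNReal.ofReal (Real.exp (-γ * t)) ≤ D :=
        lintegral_mono_set Set.Ioc_subset_Ioi_self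
      refine le_trans ?_ h2
      refine lintegral_mono_ae ?_
      rw [ae_restrict_iff' measurableSet_Ioc]
      refine Filter.Eventually.of_forall fun t ht => ?_
      refine mul_le_mul' ?_ ?_
      · exact measure_mono fun ω hω => lt_of_le_of_lt ht.2 hω
      · exact ENNReal.ofReal_le_ofReal (Real.exp_le_exp.mpr (by nlinarith [ht.1, ht.2]))
    refine lt_of_lt_of_le ?_ hlow
    refine ENNReal.mul_pos (mul_ne_zero hn.ne' ?_) ?_
    · exact (ENNReal.ofReal_pos.mpr (Real.exp_pos _)).ne'
    · exact (ENNReal.ofReal_pos.mpr hcpos).ne'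
  -- conclude
  have hDr : D.toReal ≠ 0 := ENNReal.toReal_ne_zero.mpr ⟨hDpos.ne', hDfin⟩
  rw [hden, hnum, ENNReal.toReal_mul, ENNReal.toReal_ofReal hγ.le, mul_div_assoc,
    div_self hDr, mul_one]
end

section
/- Let R* be defined as the supremum over price vectors p (with p_k ∈ [0, v̄_k]) of R(p) = (∑_k ρ_k (p_k − c) F̄_k(p_k)) / (1 + ∑_k ρ_k F̄_k(p_k)), and suppose this supremum is attained at p*. Then for every feasible price vector p, R* ≥ ∑_k ρ_k (p_k − c − R*) F̄_k(p_k), with equality when p = p*. Consequently p* maximizes the separable function p ↦ ∑_k ρ_k (p_k − c − R*) F̄_k(p_k), and hence each component p*_k maximizes q ↦ (q − c − R*) F̄_k(q) over [0, v̄_k]. -/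
open Set

theorem stmt6 (K : Type*) [Fintype K] [Nonempty K]
    (ρk vbar : K → ℝ) (hρ : ∀ k, 0 < ρk k) (hv : ∀ k, 0 < vbar k)
    (c : ℝ) (hc : 0 ≤ c)
    (Fbar : K → ℝ → ℝ) (hF : ∀ k x, Fbar k x ∈ Set.Icc (0:ℝ) 1)
    (R : (K → ℝ) → ℝ)
    (hR : ∀ p, R p = (∑ k, ρk k * (p k - c) * Fbar k (p k)) /
        (1 + ∑ k, ρk k * Fbar k (p k)))
    (pstar : K → ℝ) (hpfeas : ∀ k, pstar k ∈ Set.Icc 0 (vbar k))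
    (hopt : ∀ p : K → ℝ, (∀ k, p k ∈ Set.Icc 0 (vbar k)) → R p ≤ R pstar) :
    (∀ p : K → ℝ, (∀ k, p k ∈ Set.Icc 0 (vbar k)) →
        ∑ k, ρk k * (p k - c - R pstar) * Fbar k (p k) ≤ R pstar) ∧
    (∑ k, ρk k * (pstar k - c - R pstar) * Fbar k (pstar k) = R pstar) ∧
    (∀ p : K → ℝ, (∀ k, p k ∈ Set.Icc 0 (vbar k)) →
        ∑ k, ρk k * (p k - c - R pstar) * Fbar k (p k) ≤
          ∑ k, ρk k * (pstar k - c - R pstar) * Fbar k (pstar k)) ∧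
    (∀ k, ∀ q ∈ Set.Icc 0 (vbar k),
        (q - c - R pstar) * Fbar k q ≤ (pstar k - c - R pstar) * Fbar k (pstar k)) := by
  classical
  set Rs := R pstar with hRs
  have hDpos : ∀ p : K → ℝ, (0:ℝ) < 1 + ∑ k, ρk k * Fbar k (p k) := by
    intro p
    have : (0:ℝ) ≤ ∑ k, ρk k * Fbar k (p k) :=
      Finset.sum_nonneg fun k _ => mul_nonneg (hρ k).le (hF k (p k)).1
    linarith
  -- key inequality: N(p) ≤ Rs * D(p)
  have hkey : ∀ p : K → ℝ, (∀ k, p k ∈ Set.Icc 0 (vbar k)) →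
      (∑ k, ρk k * (p k - c) * Fbar k (p k)) ≤ Rs * (1 + ∑ k, ρk k * Fbar k (p k)) := by
    intro p hp
    have h := hopt p hp
    rw [hR p] at h
    have := (div_le_iff₀ (hDpos p)).1 h
    linarith [this]
  -- split lemma
  have hsplit : ∀ p : K → ℝ,
      ∑ k, ρk k * (p k - c - Rs) * Fbar k (p k)
        = (∑ k, ρk k * (p k - c) * Fbar k (p k)) - Rs * (∑ k, ρk k * Fbar k (p k)) := by
    intro p
    rw [Finset.mul_sum, ← Finset.sum_sub_distrib]
    exact Finset.sum_congr rfl fun k _ => by ring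
  have h1 : ∀ p : K → ℝ, (∀ k, p k ∈ Set.Icc 0 (vbar k)) →
      ∑ k, ρk k * (p k - c - Rs) * Fbar k (p k) ≤ Rs := by
    intro p hp
    have := hkey p hp
    rw [hsplit p]; linarith
  have heqN : (∑ k, ρk k * (pstar k - c) * Fbar k (pstar k))
      = Rs * (1 + ∑ k, ρk k * Fbar k (pstar k)) := by
    have h := hR pstar
    rw [← hRs] at h
    field_simp [ne_of_gt (hDpos pstar)] at h
    linarith [h]
  have h2 : ∑ k, ρk k * (pstar k - c - Rs) * Fbar k (pstar k) = Rs := by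
    rw [hsplit pstar]; linarith [heqN]
  have h3 : ∀ p : K → ℝ, (∀ k, p k ∈ Set.Icc 0 (vbar k)) →
      ∑ k, ρk k * (p k - c - Rs) * Fbar k (p k) ≤
        ∑ k, ρk k * (pstar k - c - Rs) * Fbar k (pstar k) := by
    intro p hp
    rw [h2]; exact h1 p hp
  refine ⟨h1, h2, h3, ?_⟩
  intro k q hq
  set p := Function.update pstar k q with hp
  have hpf : ∀ j, p j ∈ Set.Icc 0 (vbar j) := by
    intro j
    by_cases hjk : j = k
    · subst hjk; simpa [hp] using hq
    · simpa [hp, Function.update_of_ne hjk] using hpfeas j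
  have hsum := h3 p hpf
  have hsum1 : ∑ j, ρk j * (p j - c - Rs) * Fbar j (p j)
      = ∑ j ∈ Finset.univ.erase k, ρk j * (pstar j - c - Rs) * Fbar j (pstar j)
        + ρk k * (q - c - Rs) * Fbar k q := by
    rw [← Finset.sum_erase_add _ _ (Finset.mem_univ k)]
    congr 1
    · exact Finset.sum_congr rfl fun j hj => by
        rw [hp, Function.update_of_ne (Finset.ne_of_mem_erase hj)]
    · rw [hp]; simp
  have hsum2 : ∑ j, ρk j * (pstar j - c - Rs) * Fbar j (pstar j)
      = ∑ j ∈ Finset.univ.erase k, ρk j * (pstar j - c - Rs) * Fbar j (pstar j)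
        + ρk k * (pstar k - c - Rs) * Fbar k (pstar k) :=
    (Finset.sum_erase_add _ _ (Finset.mem_univ k)).symm
  rw [hsum1, hsum2] at hsum
  have : ρk k * ((q - c - Rs) * Fbar k q) ≤ ρk k * ((pstar k - c - Rs) * Fbar k (pstar k)) := by
    nlinarith [hsum]
  exact le_of_mul_le_mul_left this (hρ k)
end

section
/- Define M(R) = (∑_k ρ_k (p_k(R) − c) F̄_k(p_k(R))) / (1 + ∑_k ρ_k F̄_k(p_k(R))), where p_k(R) maximizes (q − c − R) F̄_k(q) over [0, v̄_k]. If R* is the optimal earning rate, i.e., R* = sup_p R(p) with R(p) = (∑_k ρ_k (p_k − c) F̄_k(p_k))/(1 + ∑_k ρ_k F̄_k(p_k)), then M(R) ≤ R* for all R ≥ 0, and M(R*) = R* (R* is a fixed point of M that maximizes M). -/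
open Set

theorem stmt9 (K : Type*) [Fintype K] [Nonempty K]
    (ρk vbar : K → ℝ) (hρ : ∀ k, 0 < ρk k) (hv : ∀ k, 0 < vbar k)
    (c : ℝ) (hc : 0 ≤ c)
    (Fbar : K → ℝ → ℝ) (hF : ∀ k x, Fbar k x ∈ Set.Icc (0:ℝ) 1)
    (R : (K → ℝ) → ℝ)
    (hR : ∀ p, R p = (∑ k, ρk k * (p k - c) * Fbar k (p k)) /
        (1 + ∑ k, ρk k * Fbar k (p k)))
    -- p · k is the best-response price for class k given opportunity cost R
    (pr : ℝ → K → ℝ)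
    (hprfeas : ∀ r, 0 ≤ r → ∀ k, pr r k ∈ Set.Icc 0 (vbar k))
    (hprmax : ∀ r, 0 ≤ r → ∀ k, ∀ q ∈ Set.Icc 0 (vbar k),
        (q - c - r) * Fbar k q ≤ (pr r k - c - r) * Fbar k (pr r k))
    -- Rstar is the optimal earning rate, attained at pstar
    (pstar : K → ℝ) (hpfeas : ∀ k, pstar k ∈ Set.Icc 0 (vbar k))
    (hopt : ∀ p : K → ℝ, (∀ k, p k ∈ Set.Icc 0 (vbar k)) → R p ≤ R pstar)
    (Rstar : ℝ) (hRstar : Rstar = R pstar) (hRstar0 : 0 ≤ Rstar)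
    -- M is the response function
    (M : ℝ → ℝ) (hM : ∀ r, M r = R (pr r)) :
    (∀ r, 0 ≤ r → M r ≤ Rstar) ∧ M Rstar = Rstar := by
  have hdenom : ∀ p : K → ℝ, 0 < 1 + ∑ k, ρk k * Fbar k (p k) := by
    intro p
    have : 0 ≤ ∑ k, ρk k * Fbar k (p k) :=
      Finset.sum_nonneg fun k _ => mul_nonneg (hρ k).le (hF k (p k)).1
    linarith
  have hle : ∀ r, 0 ≤ r → M r ≤ Rstar := by
    intro r hr
    rw [hM, hRstar]
    exact hopt _ (hprfeas r hr)
  refine ⟨hle, le_antisymm (hle Rstar hRstar0) ?_⟩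
  rw [hM, hR]
  set p' := pr Rstar with hp'
  have hA : (∑ k, ρk k * (pstar k - c) * Fbar k (pstar k)) =
      Rstar * (1 + ∑ k, ρk k * Fbar k (pstar k)) := by
    have := hRstar
    rw [hR] at this
    field_simp [ne_of_gt (hdenom pstar)] at this
    linarith
  have key : Rstar ≤ ∑ k, ρk k * ((p' k - c - Rstar) * Fbar k (p' k)) := by
    have hsum : (∑ k, ρk k * ((pstar k - c - Rstar) * Fbar k (pstar k))) = Rstar := by
      have : (∑ k, ρk k * ((pstar k - c - Rstar) * Fbar k (pstar k))) =
          (∑ k, ρk k * (pstar k - c) * Fbar k (pstar k)) -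
            Rstar * (∑ k, ρk k * Fbar k (pstar k)) := by
        rw [Finset.mul_sum, ← Finset.sum_sub_distrib]
        exact Finset.sum_congr rfl fun k _ => by ring
      rw [this, hA]; ring
    calc Rstar = ∑ k, ρk k * ((pstar k - c - Rstar) * Fbar k (pstar k)) := hsum.symm
      _ ≤ ∑ k, ρk k * ((p' k - c - Rstar) * Fbar k (p' k)) :=
        Finset.sum_le_sum fun k _ => mul_le_mul_of_nonneg_left
          (hprmax Rstar hRstar0 k (pstar k) (hpfeas k)) (hρ k).le
  rw [le_div_iff₀ (hdenom p')]
  have : (∑ k, ρk k * ((p' k - c - Rstar) * Fbar k (p' k))) =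
      (∑ k, ρk k * (p' k - c) * Fbar k (p' k)) -
        Rstar * (∑ k, ρk k * Fbar k (p' k)) := by
    rw [Finset.mul_sum, ← Finset.sum_sub_distrib]
    exact Finset.sum_congr rfl fun k _ => by ring
  rw [this] at key
  linarith
end
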